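/- Let K, K_{AL}, K_{AR}, K_{NL}, K_{NR}, K_C, P be graded abelian groups, with P = ℤ[a1,a2] and Q = ℤ[n_L,n_R] graded polynomial rings, and maps s : P → Q, s_L : K_{AL} → K_{NL}, s_R : K_{AR} → K_{NR} graded homomorphisms with s injective. Define d_0 : (P ⊕ K_{AL}) ⊕ (P ⊕ K_{AR}) ⊕ (Q ⊕ K_{NL} ⊕ K_{NR} ⊕ K_C) → (Q ⊕ K_{NL}) ⊕ (Q ⊕ K_{NR}) ⊕ P by d_0(a_L + k_{AL}, a_R + k_{AR}, x + k_{NL} + k_{NR} + k_C) = (−s(a_L) − s_L(k_{AL}) + x + k_{NL}, −s(a_R) − s_R(k_{AR}) − x − k_{NR}, a_L + a_R). Then the map P ⊕ K_{AL} ⊕ K_{AR} ⊕ K_C → Ker(d_0) given by (a, k_{AL}, k_{AR}, k_C) ↦ (a + k_{AL}, −a + k_{AR}, s(a) + s_L(k_{AL}) − s_R(k_{AR}) + k_C) is an isomorphism of graded abelian groups onto Ker(d_0). -/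
import Mathlib


/-- The kernel computation for `d_0 = d_1 : E_1^{0,·} → E_1^{1,·}` in the spectral sequence
for `𝔐₂(X₂)`: with `P = ℤ[a1,a2]`, `Q = ℤ[n_L,n_R]`, `s : P → Q` injective and
`s_L : K_{AL} → K_{NL}`, `s_R : K_{AR} → K_{NR}`, the map
`(a, k_{AL}, k_{AR}, k_C) ↦ (a + k_{AL}, −a + k_{AR}, s(a) + s_L(k_{AL}) − s_R(k_{AR}) + k_C)`
is an isomorphism of `P ⊕ K_{AL} ⊕ K_{AR} ⊕ K_C` onto `ker d_0`. -/
theorem stmt12 (KAL KNL KAR KNR KC : Type)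
    [AddCommGroup KAL] [AddCommGroup KNL] [AddCommGroup KAR] [AddCommGroup KNR]
    [AddCommGroup KC]
    (s : MvPolynomial (Fin 2) ℤ →+ MvPolynomial (Fin 2) ℤ) (hs : Function.Injective s)
    (sL : KAL →+ KNL) (sR : KAR →+ KNR) :
    let P := MvPolynomial (Fin 2) ℤ
    let Q := MvPolynomial (Fin 2) ℤ
    let d0 : (P × KAL) × (P × KAR) × (Q × KNL × KNR × KC) →
        (Q × KNL) × (Q × KNR) × P := fun v =>
      ((-s v.1.1 + v.2.2.1, -sL v.1.2 + v.2.2.2.1),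
       (-s v.2.1.1 - v.2.2.1, -sR v.2.1.2 - v.2.2.2.2.1),
       v.1.1 + v.2.1.1)
    let φ : P × KAL × KAR × KC → (P × KAL) × (P × KAR) × (Q × KNL × KNR × KC) := fun w =>
      ((w.1, w.2.1), (-w.1, w.2.2.1), (s w.1, sL w.2.1, -sR w.2.2.1, w.2.2.2))
    Function.Injective φ ∧ Set.range φ = {v | d0 v = 0} := by
  intro P Q d0 φ
  constructor
  · intro w w' h
    obtain ⟨a, kAL, kAR, kC⟩ := w
    obtain ⟨a', kAL', kAR', kC'⟩ := w'
    simp only [φ, Prod.mk.injEq] at h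
    obtain ⟨⟨h1, h2⟩, _, _, _, _, h3⟩ := h
    simp_all
  · ext v
    obtain ⟨⟨aL, kAL⟩, ⟨aR, kAR⟩, x, kNL, kNR, kC⟩ := v
    simp only [Set.mem_range, Set.mem_setOf_eq, φ, d0, Prod.mk.injEq, Prod.ext_iff]
    constructor
    · rintro ⟨⟨a, kAL', kAR', kC'⟩, ⟨h1, h2⟩, ⟨h3, h4⟩, h5, h6, h7, h8⟩
      simp only at *
      subst h1 h2 h3 h4 h5 h6 h7 h8
      simp
    · rintro ⟨⟨h1, h2⟩, ⟨h3, h4⟩, h5⟩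
      simp only [Prod.fst_zero, Prod.snd_zero] at h1 h2 h3 h4 h5
      refine ⟨⟨aL, kAL, kAR, kC⟩, ⟨rfl, rfl⟩, ⟨?_, rfl⟩, ?_, ?_, ?_, rfl⟩
      · linear_combination -h5
      · linear_combination -h1
      · linear_combination (norm := abel) -h2
      · linear_combination (norm := abel) h4
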